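/- arXiv:2605.08973 — 6 statements merged into one kernel-verified Lean document; each statement's English description precedes it below -/
import Mathlib

section
/- If A is a real n×n matrix with rank at most r (where 1 ≤ r ≤ n) and with infinity operator norm at most 1, then the trace of A is at most r. -/
open Polynomial Matrix

lemma root_norm_le' {n : ℕ} (B : Matrix (Fin n) (Fin n) ℂ) (lam : ℂ)
    (h : B.charpoly.IsRoot lam) (hb : ∀ i, ∑ j, ‖B i j‖ ≤ 1) : ‖lam‖ ≤ 1 := by
  have hdet : (Matrix.scalar (Fin n) lam - B).det = 0 := by
    have := _root_.eval_det (charmatrix B) lam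
    rw [← Matrix.charpoly, h.eq_zero, matPolyEquiv_charmatrix] at this
    simp only [eval_sub, eval_X, eval_C] at this
    exact this.symm
  obtain ⟨v, hv0, hv⟩ := (Matrix.exists_mulVec_eq_zero_iff).mpr hdet
  have hBv : Matrix.toLin' B v = lam • v := by
    rw [Matrix.sub_mulVec, sub_eq_zero] at hv
    rw [Matrix.toLin'_apply, ← hv, Matrix.scalar_apply, ← Matrix.smul_one_eq_diagonal,
      Matrix.smul_mulVec, Matrix.one_mulVec]
  have heig : Module.End.HasEigenvalue (Matrix.toLin' B) lam :=
    Module.End.hasEigenvalue_of_hasEigenvector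
      ⟨Module.End.mem_eigenspace_iff.mpr hBv, hv0⟩
  obtain ⟨k, hk⟩ := eigenvalue_mem_ball heig
  rw [Metric.mem_closedBall, dist_eq_norm] at hk
  calc ‖lam‖ = ‖lam - B k k + B k k‖ := by ring_nf
    _ ≤ ‖lam - B k k‖ + ‖B k k‖ := norm_add_le _ _
    _ ≤ (∑ j ∈ Finset.univ.erase k, ‖B k j‖) + ‖B k k‖ := by linarith
    _ = ∑ j, ‖B k j‖ := by
        exact Finset.sum_erase_add Finset.univ (fun j => ‖B k j‖) (Finset.mem_univ k)
    _ ≤ 1 := hb k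

theorem trace_le_rank_of_norm_le_one
    {n r : ℕ} (hr1 : 1 ≤ r) (hrn : r ≤ n)
    (A : Matrix (Fin n) (Fin n) ℝ)
    (hrank : A.rank ≤ r)
    (hnorm : ∀ i, ∑ j, |A i j| ≤ 1) :
    A.trace ≤ r := by
  classical
  set B : Matrix (Fin n) (Fin n) ℂ := A.map (algebraMap ℝ ℂ) with hBdef
  set p : ℂ[X] := B.charpoly with hpdef
  have hpmap : p = (A.charpoly).map (algebraMap ℝ ℂ) := Matrix.charpoly_map A _
  set k : ℕ := (A.charpoly).natTrailingDegree with hkdef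
  -- dim of kernel ≤ k
  have hchar : (Matrix.mulVecLin A).charpoly = A.charpoly := by
    have hA : LinearMap.toMatrix (Pi.basisFun ℝ (Fin n)) (Pi.basisFun ℝ (Fin n))
        (Matrix.mulVecLin A) = A := by
      rw [LinearMap.toMatrix_eq_toMatrix', ← Matrix.toLin'_apply' A, LinearMap.toMatrix'_toLin']
    conv_rhs => rw [← hA]
    exact (LinearMap.charpoly_toMatrix (Matrix.mulVecLin A) (Pi.basisFun ℝ (Fin n))).symm
  have hkerle : Module.finrank ℝ (LinearMap.ker (Matrix.mulVecLin A)) ≤ k := by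
    rw [hkdef, ← hchar, ← LinearMap.finrank_maxGenEigenspace_zero_eq]
    apply Submodule.finrank_mono
    intro x hx
    rw [Module.End.mem_maxGenEigenspace]
    exact ⟨1, by simpa [LinearMap.mem_ker] using hx⟩
  have hranknull : A.rank + Module.finrank ℝ (LinearMap.ker (Matrix.mulVecLin A)) = n := by
    have := LinearMap.finrank_range_add_finrank_ker (Matrix.mulVecLin A)
    rw [Matrix.rank]
    simpa using this
  -- p is nonzero, degree n
  have hp0 : p ≠ 0 := (Matrix.charpoly_monic B).ne_zero
  -- roots
  set s : Multiset ℂ := p.roots with hsdef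
  have hscard : Multiset.card s = n := by
    have h1 : p.natDegree = n := by
      rw [hpdef, Matrix.charpoly_natDegree_eq_dim, Fintype.card_fin]
    rw [hsdef, ← h1]
    exact (Polynomial.splits_iff_card_roots.mp (IsAlgClosed.splits p))
  have hcount : k ≤ s.count 0 := by
    rw [hsdef, Polynomial.count_roots, Polynomial.rootMultiplicity_eq_natTrailingDegree']
    rw [hpmap]
    refine Polynomial.le_natTrailingDegree (by rw [← hpmap]; exact hp0) (fun m hm => ?_)
    rw [Polynomial.coeff_map, Polynomial.coeff_eq_zero_of_lt_natTrailingDegree hm, map_zero]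
  -- assemble
  set t : Multiset ℂ := s.filter (fun x => ¬ x = 0) with htdef
  have hsplit : s.filter (fun x => x = 0) + t = s := Multiset.filter_add_not _ s
  have hcard0 : (s.filter (fun x => x = 0)).card = s.count 0 := by
    simp [Multiset.count, Multiset.countP_eq_card_filter, eq_comm]
  have htcard : t.card + s.count 0 = n := by
    have := congrArg Multiset.card hsplit
    rw [Multiset.card_add, hcard0] at this
    omega
  -- trace identities
  have hsum : B.trace = s.sum := Matrix.trace_eq_sum_roots_charpoly B
  have h0sum : (s.filter (fun x => x = 0)).sum = 0 :=
    Multiset.sum_eq_zero (fun x hx => (Multiset.mem_filter.mp hx).2)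
  have hst : s.sum = t.sum := by
    conv_lhs => rw [← hsplit]
    rw [Multiset.sum_add, h0sum, zero_add]
  have htrace : (A.trace : ℂ) = B.trace := by
    rw [Matrix.trace, Matrix.trace, Complex.ofReal_sum]
    refine Finset.sum_congr rfl (fun i _ => ?_)
    simp [hBdef, Matrix.diag]
  -- bound each root
  have hroots1 : ∀ x ∈ t, x.re ≤ 1 := by
    intro x hx
    have hxs : x ∈ s := Multiset.mem_of_mem_filter hx
    have hxroot : p.IsRoot x := Polynomial.isRoot_of_mem_roots hxs
    have hb : ∀ i, ∑ j, ‖B i j‖ ≤ 1 := by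
      intro i
      calc ∑ j, ‖B i j‖ = ∑ j, |A i j| := by
            refine Finset.sum_congr rfl (fun j _ => ?_)
            simp [hBdef]
        _ ≤ 1 := hnorm i
    exact (Complex.re_le_norm x).trans (root_norm_le' B x hxroot hb)
  -- sum bound
  have hre : A.trace = (t.map Complex.re).sum := by
    have : (A.trace : ℂ).re = A.trace := Complex.ofReal_re _
    rw [← this, htrace, hsum, hst, ← Complex.coe_reAddGroupHom,
      ← AddMonoidHom.map_multiset_sum]
  have hbound : A.trace ≤ (t.card : ℝ) := by
    rw [hre]
    have := Multiset.sum_le_card_nsmul (t.map Complex.re) 1 (by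
      intro x hx
      obtain ⟨y, hy, rfl⟩ := Multiset.mem_map.mp hx
      exact hroots1 y hy)
    simpa using this
  have hfinal : t.card ≤ r := by omega
  calc A.trace ≤ (t.card : ℝ) := hbound
    _ ≤ (r : ℝ) := by exact_mod_cast hfinal
end

section
/- Let n ≥ 4 be even. Every (n−2)-dimensional linear subspace V of ℝ^n contains a nonzero vector x such that there exists an index i with |x_i| ≥ (n/2 − 1)·|x_j| for all j ≠ i. -/
open Finset

namespace CodimTwo
noncomputable section

def det2 (a b : ℝ × ℝ) : ℝ := a.1 * b.2 - a.2 * b.1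
def dot2 (a b : ℝ × ℝ) : ℝ := a.1 * b.1 + a.2 * b.2
def perp2 (a : ℝ × ℝ) : ℝ × ℝ := (-a.2, a.1)

lemma det2_comm_abs (a b : ℝ × ℝ) : |det2 a b| = |det2 b a| := by
  rw [det2, det2, ← abs_neg]; ring_nf

lemma pluecker (a b c d : ℝ × ℝ) :
    det2 a c * det2 b d = det2 a b * det2 c d + det2 a d * det2 b c := by
  simp only [det2]; ring

lemma abs_pluecker (a b c d : ℝ × ℝ) :
    |det2 a c| * |det2 b d| ≤ |det2 a b| * |det2 c d| + |det2 a d| * |det2 b c| := by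
  rw [← abs_mul, pluecker a b c d]
  calc |det2 a b * det2 c d + det2 a d * det2 b c|
      ≤ |det2 a b * det2 c d| + |det2 a d * det2 b c| := abs_add_le _ _
    _ = |det2 a b| * |det2 c d| + |det2 a d| * |det2 b c| := by rw [abs_mul, abs_mul]

/-- Core combinatorial lemma via Plücker relations. -/
lemma core {n : ℕ} (hn : 0 < n) (w : Fin n → ℝ × ℝ) :
    ∃ j : Fin n, ∀ k : Fin n,
      (n : ℝ) * |det2 (w j) (w k)| ≤ 2 * ∑ m, |det2 (w m) (w k)| := by
  set T : Fin n → ℝ := fun k => ∑ m, |det2 (w m) (w k)| with hT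
  obtain ⟨j, -, hj⟩ := Finset.exists_min_image Finset.univ T ⟨⟨0, hn⟩, Finset.mem_univ _⟩
  refine ⟨j, fun k => ?_⟩
  by_contra hlt
  push_neg at hlt
  set D := |det2 (w j) (w k)| with hD
  -- basic facts
  have hTnonneg : ∀ l, 0 ≤ T l := fun l => Finset.sum_nonneg fun m _ => abs_nonneg _
  have hTk_ge : D ≤ T k := Finset.single_le_sum (f := fun m => |det2 (w m) (w k)|)
    (fun m _ => abs_nonneg _) (Finset.mem_univ j)
  have hDpos : 0 < D := by
    rcases lt_or_ge 0 D with h | h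
    · exact h
    · have : D = 0 := le_antisymm h (abs_nonneg _)
      rw [this] at hlt
      have := hTnonneg k
      nlinarith
  have hTj_pos : 0 < T j := lt_of_lt_of_le hDpos (by
    calc D = |det2 (w k) (w j)| := det2_comm_abs _ _
    _ ≤ T j := Finset.single_le_sum (f := fun m => |det2 (w m) (w j)|)
        (fun m _ => abs_nonneg _) (Finset.mem_univ k))
  -- Plücker-summed inequality : D * (∑ l, T l) ≤ 2 * T j * T k
  have key : D * (∑ l, T l) ≤ 2 * (T j * T k) := by
    have step : ∀ m l : Fin n, D * |det2 (w m) (w l)| ≤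
        |det2 (w j) (w m)| * |det2 (w k) (w l)| +
        |det2 (w j) (w l)| * |det2 (w k) (w m)| := by
      intro m l
      have := abs_pluecker (w j) (w m) (w k) (w l)
      calc D * |det2 (w m) (w l)| = |det2 (w j) (w k)| * |det2 (w m) (w l)| := rfl
        _ ≤ |det2 (w j) (w m)| * |det2 (w k) (w l)| + |det2 (w j) (w l)| * |det2 (w m) (w k)| := this
        _ = |det2 (w j) (w m)| * |det2 (w k) (w l)| + |det2 (w j) (w l)| * |det2 (w k) (w m)| := by
            rw [det2_comm_abs (w m) (w k)]
    calc D * (∑ l, T l) = ∑ l, ∑ m, D * |det2 (w m) (w l)| := by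
          rw [Finset.mul_sum]; congr 1; ext l; rw [hT, Finset.mul_sum]
      _ ≤ ∑ l, ∑ m, (|det2 (w j) (w m)| * |det2 (w k) (w l)| +
            |det2 (w j) (w l)| * |det2 (w k) (w m)|) := by
          refine Finset.sum_le_sum fun l _ => Finset.sum_le_sum fun m _ => step m l
      _ = 2 * (T j * T k) := by
          have eA : (∑ m, |det2 (w j) (w m)|) = T j := by
            rw [hT]; exact Finset.sum_congr rfl fun m _ => det2_comm_abs _ _
          have eB : (∑ m, |det2 (w k) (w m)|) = T k := by
            rw [hT]; exact Finset.sum_congr rfl fun m _ => det2_comm_abs _ _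
          have expand : ∀ l : Fin n, ∑ m, (|det2 (w j) (w m)| * |det2 (w k) (w l)| +
              |det2 (w j) (w l)| * |det2 (w k) (w m)|)
              = T j * |det2 (w k) (w l)| + |det2 (w j) (w l)| * T k := by
            intro l
            rw [Finset.sum_add_distrib, ← Finset.sum_mul, ← Finset.mul_sum, eA, eB]
          rw [Finset.sum_congr rfl (fun l _ => expand l), Finset.sum_add_distrib,
            ← Finset.sum_mul, ← Finset.mul_sum, eB, eA]
          ring
  -- contradiction
  have hsum_ge : (n : ℝ) * T j ≤ ∑ l, T l := by
    calc (n : ℝ) * T j = ∑ _l : Fin n, T j := by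
          rw [Finset.sum_const, Finset.card_univ, Fintype.card_fin, nsmul_eq_mul]
      _ ≤ ∑ l, T l := Finset.sum_le_sum fun l _ => hj l (Finset.mem_univ l)
  have : D * ((n:ℝ) * T j) ≤ 2 * (T j * T k) :=
    le_trans (by exact mul_le_mul_of_nonneg_left hsum_ge (le_of_lt hDpos)) key
  nlinarith [hlt, hDpos, hTj_pos]


lemma dot2_add_smul (a u v : ℝ × ℝ) (s : ℝ) :
    dot2 a (u + s • v) = dot2 a u + s * dot2 a v := by
  simp [dot2, Prod.fst_add, Prod.snd_add, Prod.smul_fst, Prod.smul_snd, smul_eq_mul]; ring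

lemma dot2_smul (a b : ℝ × ℝ) (c : ℝ) : dot2 a (c • b) = c * dot2 a b := by
  simp [dot2, Prod.smul_fst, Prod.smul_snd, smul_eq_mul]; ring

lemma dot2_perp (a b : ℝ × ℝ) : dot2 a (perp2 b) = - det2 a b := by
  simp [dot2, perp2, det2]; ring

lemma dot2_coord (a u : ℝ × ℝ) :
    dot2 a u = u.1 * dot2 a (1, 0) + u.2 * dot2 a (0, 1) := by
  simp [dot2]; ring

lemma dot2_neg (a v : ℝ × ℝ) : dot2 a (-v) = - dot2 a v := by
  simp [dot2]; ring

lemma dot2_eq_zero_perp {a u : ℝ × ℝ} (ha : a ≠ 0) (h : dot2 a u = 0) :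
    ∃ c : ℝ, u = c • perp2 a := by
  obtain ⟨p, q⟩ := a
  obtain ⟨x, y⟩ := u
  simp only [dot2] at h
  by_cases hp : p = 0
  · have hq : q ≠ 0 := by
      intro hq; exact ha (by simp [hp, hq, Prod.ext_iff])
    refine ⟨-x / q, ?_⟩
    have hy : y = 0 := by
      rw [hp] at h
      simp only [zero_mul, zero_add] at h
      exact (mul_eq_zero.1 h).resolve_left hq
    simp only [perp2, Prod.smul_mk, smul_eq_mul, Prod.mk.injEq]
    constructor
    · field_simp
    · simp [hp, hy]
  · refine ⟨y / p, ?_⟩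
    simp only [perp2, Prod.smul_mk, smul_eq_mul, Prod.mk.injEq]
    constructor
    · field_simp; linarith
    · field_simp

lemma abs_eq_sign_mul {σv z : ℝ} (hσ : σv = 1 ∨ σv = -1) (h : 0 < σv * z) :
    |z| = σv * z := by
  rcases hσ with h1 | h1 <;> subst h1
  · rw [one_mul] at h ⊢; exact abs_of_pos h
  · have : z < 0 := by linarith [neg_pos.mp (by linarith : 0 < -z)]
    rw [abs_of_neg this]; ring

/-- Extension of the finitely many determinant constraints to all directions. -/
lemma all_directions {n : ℕ} (w : Fin n → ℝ × ℝ) (hw : ∀ k, w k ≠ 0)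
    (hspan : ∀ u : ℝ × ℝ, (∀ m, dot2 (w m) u = 0) → u = 0)
    (j : Fin n)
    (hj : ∀ k, (n : ℝ) * |det2 (w j) (w k)| ≤ 2 * ∑ m, |det2 (w m) (w k)|) :
    ∀ u : ℝ × ℝ, (n : ℝ) * dot2 (w j) u ≤ 2 * ∑ m, |dot2 (w m) u| := by
  by_contra hcon
  push_neg at hcon
  obtain ⟨u0, hu0⟩ := hcon
  set g : ℝ × ℝ → ℝ := fun u => 2 * ∑ m, |dot2 (w m) u| - (n : ℝ) * dot2 (w j) u with hgdef
  have hgu0 : g u0 < 0 := by simp only [hgdef]; linarith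
  -- continuity of g
  have hdotc : ∀ a : ℝ × ℝ, Continuous fun u : ℝ × ℝ => dot2 a u := by
    intro a; unfold dot2; fun_prop
  have hgcont : Continuous g := by
    apply Continuous.sub
    · exact continuous_const.mul (continuous_finset_sum _ fun m _ => (hdotc (w m)).abs)
    · exact continuous_const.mul (hdotc (w j))
  -- nonnegativity on multiples of perps
  have hgperp : ∀ (c : ℝ) (k : Fin n), 0 ≤ g (c • perp2 (w k)) := by
    intro c k
    have hsum : (∑ m, |dot2 (w m) (c • perp2 (w k))|) = |c| * ∑ m, |det2 (w m) (w k)| := by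
      rw [Finset.mul_sum]
      refine Finset.sum_congr rfl fun m _ => ?_
      rw [dot2_smul, dot2_perp, abs_mul, abs_neg]
    have hdj : dot2 (w j) (c • perp2 (w k)) = - (c * det2 (w j) (w k)) := by
      rw [dot2_smul, dot2_perp]; ring
    simp only [hgdef, hsum, hdj]
    have h1 := hj k
    have h2 : -(c * det2 (w j) (w k)) ≤ |c| * |det2 (w j) (w k)| := by
      rw [← abs_mul]; exact neg_le_abs _
    have h3 : |c| * ((n : ℝ) * |det2 (w j) (w k)|) ≤ |c| * (2 * ∑ m, |det2 (w m) (w k)|) :=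
      mul_le_mul_of_nonneg_left h1 (abs_nonneg c)
    nlinarith [abs_nonneg c]
  -- points in negativity region have all dots nonzero
  have hnv : ∀ u : ℝ × ℝ, g u < 0 → ∀ m, dot2 (w m) u ≠ 0 := by
    intro u hu m h0
    obtain ⟨c, rfl⟩ := dot2_eq_zero_perp (hw m) h0
    exact absurd hu (not_lt.2 (hgperp c m))
  -- signs at u0
  set σ : Fin n → ℝ := fun m => if 0 < dot2 (w m) u0 then 1 else -1 with hσdef
  have hσpm : ∀ m, σ m = 1 ∨ σ m = -1 := by
    intro m; simp only [hσdef]; split <;> simp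
  have hσ : ∀ m, 0 < σ m * dot2 (w m) u0 := by
    intro m
    have hne := hnv u0 hgu0 m
    simp only [hσdef]
    split
    · rename_i h; linarith
    · rename_i h
      have : dot2 (w m) u0 < 0 := lt_of_le_of_ne (not_lt.1 h) hne
      nlinarith
  set l : ℝ × ℝ → ℝ := fun u => 2 * ∑ m, σ m * dot2 (w m) u - (n : ℝ) * dot2 (w j) u with hldef
  have hlu0 : l u0 = g u0 := by
    simp only [hldef, hgdef]
    congr 1
    congr 1
    refine Finset.sum_congr rfl fun m _ => (abs_eq_sign_mul (hσpm m) (hσ m)).symm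
  have hllin : ∀ (u v : ℝ × ℝ) (s : ℝ), l (u + s • v) = l u + s * l v := by
    intro u v s
    simp only [hldef]
    have : ∀ m : Fin n, σ m * dot2 (w m) (u + s • v)
        = σ m * dot2 (w m) u + s * (σ m * dot2 (w m) v) := by
      intro m; rw [dot2_add_smul]; ring
    rw [Finset.sum_congr rfl fun m _ => this m, Finset.sum_add_distrib, ← Finset.mul_sum,
      dot2_add_smul]
    ring
  have hlcoord : ∀ u : ℝ × ℝ, l u = u.1 * l (1, 0) + u.2 * l (0, 1) := by
    intro u
    simp only [hldef]
    have : ∀ m : Fin n, σ m * dot2 (w m) u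
        = u.1 * (σ m * dot2 (w m) (1,0)) + u.2 * (σ m * dot2 (w m) (0,1)) := by
      intro m; rw [dot2_coord (w m) u]; ring
    rw [Finset.sum_congr rfl fun m _ => this m, Finset.sum_add_distrib, ← Finset.mul_sum,
      ← Finset.mul_sum, dot2_coord (w j) u]
    ring
  set v : ℝ × ℝ := (-(l (0, 1)), l (1, 0)) with hvdef
  have hlv : l v = 0 := by rw [hlcoord v]; simp only [hvdef]; ring
  have hvne : v ≠ 0 := by
    intro h
    have h1 : l (0, 1) = 0 := by
      have := congrArg Prod.fst h; simp [hvdef] at this; linarith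
    have h2 : l (1, 0) = 0 := by
      have := congrArg Prod.snd h; simpa [hvdef] using this
    have : l u0 = 0 := by rw [hlcoord u0, h1, h2]; ring
    rw [hlu0] at this; linarith
  have hlnegv : l (-v) = 0 := by
    have := hllin 0 v (-1)
    have hl0 : l 0 = 0 := by
      simp only [hldef, dot2]
      norm_num
    have hz : (0 : ℝ × ℝ) + (-1 : ℝ) • v = -v := by
      rw [zero_add, neg_one_smul]
    rw [hz] at this
    rw [this, hl0, hlv]; ring
  -- MAIN: for any direction v' in the kernel of l, signs stay positive along the ray
  have main : ∀ v' : ℝ × ℝ, l v' = 0 →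
      ∀ s : ℝ, 0 ≤ s → ∀ m, 0 < σ m * dot2 (w m) (u0 + s • v') := by
    intro v' hv0
    set f : ℝ → ℝ := fun s => g (u0 + s • v') with hfdef
    have hfcont : Continuous f :=
      hgcont.comp (continuous_const.add (continuous_id.smul continuous_const))
    have hf0 : f 0 = g u0 := by simp [hfdef]
    -- if all signs positive at point u0 + s • v' then g = l there = g u0
    have geql : ∀ s : ℝ, (∀ m, 0 < σ m * dot2 (w m) (u0 + s • v')) → f s = g u0 := by
      intro s hs
      have : g (u0 + s • v') = l (u0 + s • v') := by
        simp only [hgdef, hldef]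
        congr 2
        refine Finset.sum_congr rfl fun m _ => abs_eq_sign_mul (hσpm m) (hs m)
      simp only [hfdef]
      rw [this, hllin, hv0, hlu0]; ring
    -- Claim 1: f s < 0 for all s ≥ 0
    have hF : ∀ s : ℝ, 0 ≤ s → f s < 0 := by
      by_contra hc
      push_neg at hc
      obtain ⟨s1, hs1, hgs1⟩ := hc
      set E : Set ℝ := Set.Ici 0 ∩ f ⁻¹' Set.Ici 0 with hEdef
      have hEne : E.Nonempty := ⟨s1, hs1, hgs1⟩
      have hEbdd : BddBelow E := ⟨0, fun s hs => hs.1⟩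
      have hEclosed : IsClosed E := isClosed_Ici.inter (isClosed_Ici.preimage hfcont)
      set β := sInf E with hβdef
      have hβE : β ∈ E := hEclosed.csInf_mem hEne hEbdd
      have hβ0 : 0 ≤ β := hβE.1
      have hfβ : 0 ≤ f β := hβE.2
      have hβpos : 0 < β := by
        rcases lt_or_eq_of_le hβ0 with h | h
        · exact h
        · exfalso; rw [← h] at hfβ; rw [hf0] at hfβ; linarith
      have hlt : ∀ s, 0 ≤ s → s < β → f s < 0 := by
        intro s h0 hsβ
        by_contra h
        push_neg at h
        exact absurd (csInf_le hEbdd ⟨h0, h⟩) (not_le.2 hsβ)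
      -- signs positive on [0, β)
      have hsign : ∀ s, 0 ≤ s → s < β → ∀ m, 0 < σ m * dot2 (w m) (u0 + s • v') := by
        intro s h0 hsβ m
        by_contra hle
        push_neg at hle
        set h : ℝ → ℝ := fun t => σ m * dot2 (w m) (u0 + t • v') with hhdef
        have hhcont : Continuous h :=
          continuous_const.mul ((hdotc (w m)).comp
            (continuous_const.add (continuous_id.smul continuous_const)))
        have hh0 : 0 < h 0 := by
          simp only [hhdef]
          have : u0 + (0:ℝ) • v' = u0 := by simp
          rw [this]; exact hσ m
        -- IVT gives a zero in [0, s]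
        have : (0:ℝ) ∈ Set.Icc (h s) (h 0) := ⟨hle, le_of_lt hh0⟩
        obtain ⟨t0, ht0mem, ht0⟩ := intermediate_value_Icc' h0 hhcont.continuousOn this
        have hdt0 : dot2 (w m) (u0 + t0 • v') = 0 := by
          rcases hσpm m with h1 | h1 <;> rw [hhdef] at ht0 <;> simp only [h1] at ht0 <;> linarith
        have hft0 : f t0 < 0 := hlt t0 ht0mem.1 (lt_of_le_of_lt ht0mem.2 hsβ)
        exact hnv _ hft0 m hdt0
      -- hence f is constant on [0, β), limit gives contradiction
      have hconst : ∀ s, 0 ≤ s → s < β → f s = g u0 := fun s h0 hsβ =>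
        geql s (hsign s h0 hsβ)
      have hne2 : Set.Nonempty (Set.Ico (0:ℝ) β) := ⟨0, le_refl _, hβpos⟩
      have hmem : β ∈ closure (Set.Ico (0:ℝ) β) := by
        rw [closure_Ico (ne_of_lt hβpos)]
        exact ⟨hβ0, le_refl _⟩
      have hnebot : (nhdsWithin β (Set.Ico (0:ℝ) β)).NeBot :=
        mem_closure_iff_nhdsWithin_neBot.1 hmem
      have htend1 : Filter.Tendsto f (nhdsWithin β (Set.Ico (0:ℝ) β)) (nhds (f β)) :=
        (hfcont.tendsto β).mono_left nhdsWithin_le_nhds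
      have htend2 : Filter.Tendsto f (nhdsWithin β (Set.Ico (0:ℝ) β)) (nhds (g u0)) := by
        apply Filter.Tendsto.congr' _ tendsto_const_nhds
        filter_upwards [self_mem_nhdsWithin] with s hs
        exact (hconst s hs.1 hs.2).symm
      have : f β = g u0 := tendsto_nhds_unique htend1 htend2
      rw [this] at hfβ; linarith
    -- Claim 2: signs positive for all s ≥ 0 (same IVT argument, now globally)
    intro s h0 m
    by_contra hle
    push_neg at hle
    set h : ℝ → ℝ := fun t => σ m * dot2 (w m) (u0 + t • v') with hhdef
    have hhcont : Continuous h :=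
      continuous_const.mul ((hdotc (w m)).comp
        (continuous_const.add (continuous_id.smul continuous_const)))
    have hh0 : 0 < h 0 := by
      simp only [hhdef]
      have : u0 + (0:ℝ) • v' = u0 := by simp
      rw [this]; exact hσ m
    have : (0:ℝ) ∈ Set.Icc (h s) (h 0) := ⟨hle, le_of_lt hh0⟩
    obtain ⟨t0, ht0mem, ht0⟩ := intermediate_value_Icc' h0 hhcont.continuousOn this
    have hdt0 : dot2 (w m) (u0 + t0 • v') = 0 := by
      rcases hσpm m with h1 | h1 <;> rw [hhdef] at ht0 <;> simp only [h1] at ht0 <;> linarith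
    exact hnv _ (hF t0 ht0mem.1) m hdt0
  -- conclude: dot2 (w m) v = 0 for all m
  have hbm : ∀ m, dot2 (w m) v = 0 := by
    intro m
    by_contra hb
    set a := dot2 (w m) u0 with hadef
    set b := dot2 (w m) v with hbdef
    set s : ℝ := (|a| + 1) / |b| with hsdef
    have hbabs : 0 < |b| := abs_pos.2 hb
    have hs0 : 0 ≤ s := div_nonneg (by positivity) (le_of_lt hbabs)
    have hsb : |s * b| = |a| + 1 := by
      rw [abs_mul, hsdef, abs_div, abs_abs, abs_of_nonneg (by positivity : (0:ℝ) ≤ |a| + 1)]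
      field_simp
    have h1 : 0 < σ m * (a + s * b) := by
      have := main v hlv s hs0 m
      rwa [dot2_add_smul] at this
    have h2 : 0 < σ m * (a - s * b) := by
      have := main (-v) hlnegv s hs0 m
      rw [dot2_add_smul, dot2_neg] at this
      have he : a + s * -b = a - s * b := by ring
      rwa [← hbdef, he] at this
    have hσsq : σ m * σ m = 1 := by rcases hσpm m with h | h <;> rw [h] <;> norm_num
    have hprod : 0 < (a + s * b) * (a - s * b) := by nlinarith
    have : (s * b) ^ 2 = (|a| + 1) ^ 2 := by rw [← hsb, sq_abs]
    nlinarith [sq_abs a, abs_nonneg a]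
  exact hvne (hspan v hbm)


lemma clm_eq_dot2 (f : (ℝ × ℝ) →L[ℝ] ℝ) (a : ℝ × ℝ) :
    f a = dot2 a (f (1, 0), f (0, 1)) := by
  have ha : a = a.1 • ((1:ℝ), (0:ℝ)) + a.2 • ((0:ℝ), (1:ℝ)) := by
    ext <;> simp
  calc f a = f (a.1 • ((1:ℝ), (0:ℝ)) + a.2 • ((0:ℝ), (1:ℝ))) := by rw [← ha]
    _ = a.1 * f (1, 0) + a.2 * f (0, 1) := by
        rw [map_add, map_smul, map_smul]; simp
    _ = dot2 a (f (1, 0), f (0, 1)) := by simp [dot2]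

lemma mem_zonotope {n : ℕ} (w : Fin n → ℝ × ℝ) (j : Fin n) (c : ℝ) (hc : 0 < c)
    (hcn : (n : ℝ) = 2 * c + 2)
    (hu : ∀ u : ℝ × ℝ, (n : ℝ) * dot2 (w j) u ≤ 2 * ∑ m, |dot2 (w m) u|) :
    ∃ t : Fin n → ℝ, (∀ k, |t k| ≤ 1) ∧ t j = 0 ∧ c • w j = ∑ k, t k • w k := by
  set S : Set (ℝ × ℝ) := {y | ∃ t : Fin n → ℝ,
    (∀ k, |t k| ≤ 1) ∧ t j = 0 ∧ y = ∑ k, t k • w k} with hSdef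
  -- S is convex
  have hconv : Convex ℝ S := by
    rintro y1 ⟨t1, ht1, ht1j, rfl⟩ y2 ⟨t2, ht2, ht2j, rfl⟩ a b ha hb hab
    refine ⟨fun k => a * t1 k + b * t2 k, fun k => ?_,
      by show a * t1 j + b * t2 j = 0; rw [ht1j, ht2j]; ring, ?_⟩
    · calc |a * t1 k + b * t2 k| ≤ |a * t1 k| + |b * t2 k| := abs_add_le _ _
        _ = a * |t1 k| + b * |t2 k| := by
            rw [abs_mul, abs_mul, abs_of_nonneg ha, abs_of_nonneg hb]
        _ ≤ a * 1 + b * 1 := by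
            gcongr
            · exact ht1 k
            · exact ht2 k
        _ = 1 := by rw [mul_one, mul_one, hab]
    · rw [Finset.smul_sum, Finset.smul_sum, ← Finset.sum_add_distrib]
      refine Finset.sum_congr rfl fun k _ => ?_
      rw [smul_smul, smul_smul, add_smul]
  -- S is closed (image of a compact box)
  have hclosed : IsClosed S := by
    set Box : Set (Fin n → ℝ) :=
      Set.univ.pi (fun _ => Set.Icc (-1 : ℝ) 1) ∩ {t | t j = 0} with hBoxdef
    have hBoxcomp : IsCompact Box :=
      (isCompact_univ_pi fun _ => isCompact_Icc).inter_right
        (isClosed_eq (continuous_apply j) continuous_const)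
    have hΦ : Continuous fun t : Fin n → ℝ => ∑ k, t k • w k :=
      continuous_finset_sum _ fun k _ => (continuous_apply k).smul continuous_const
    have him : S = (fun t : Fin n → ℝ => ∑ k, t k • w k) '' Box := by
      ext y
      constructor
      · rintro ⟨t, ht, htj, rfl⟩
        exact ⟨t, ⟨fun k _ => abs_le.1 (ht k), htj⟩, rfl⟩
      · rintro ⟨t, ⟨ht, htj⟩, rfl⟩
        exact ⟨t, fun k => abs_le.2 (ht k (Set.mem_univ k)), htj, rfl⟩
    rw [him]
    exact (hBoxcomp.image hΦ).isClosed
  -- separation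
  by_contra hz
  have hznotin : c • w j ∉ S := fun h => hz (by
    obtain ⟨t, ht, htj, hsum⟩ := h
    exact ⟨t, ht, htj, hsum⟩)
  obtain ⟨f, u, hfu, hS⟩ := geometric_hahn_banach_point_closed hconv hclosed hznotin
  -- 0 ∈ S
  have h0S : (0 : ℝ × ℝ) ∈ S := ⟨0, fun k => by simp, rfl, by simp⟩
  have hu0 : u < 0 := by simpa using hS 0 h0S
  -- the sign element
  set ts : Fin n → ℝ := fun k => if k = j then 0 else (if 0 ≤ f (w k) then 1 else -1)
    with htsdef
  have hysS : (∑ k, ts k • w k) ∈ S := by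
    refine ⟨ts, fun k => ?_, by simp [htsdef], rfl⟩
    simp only [htsdef]
    split
    · simp
    · split <;> simp
  have hfys : f (∑ k, ts k • w k) = ∑ k ∈ Finset.univ.erase j, |f (w k)| := by
    rw [map_sum]
    rw [← Finset.add_sum_erase _ (fun k => f (ts k • w k)) (Finset.mem_univ j)]
    have hj0 : f (ts j • w j) = 0 := by simp [htsdef]
    rw [hj0, zero_add]
    refine Finset.sum_congr rfl fun k hk => ?_
    have hkj : k ≠ j := Finset.ne_of_mem_erase hk
    rw [map_smul, smul_eq_mul]
    simp only [htsdef, if_neg hkj]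
    split
    · rename_i h; rw [abs_of_nonneg h]; ring
    · rename_i h; rw [abs_of_neg (not_le.1 h)]; ring
  -- S symmetric: for y in S, also -y; hence |f y| bounds
  have hfys_lt : (∑ k ∈ Finset.univ.erase j, |f (w k)|) < -u := by
    have hnegS : (-(∑ k, ts k • w k)) ∈ S := by
      obtain ⟨t, ht, htj, hsum⟩ := hysS
      refine ⟨fun k => -(t k), fun k => by rw [abs_neg]; exact ht k,
        by show -(t j) = 0; rw [htj]; ring, ?_⟩
      have hns : ∑ k, (-(t k)) • w k = -∑ k, t k • w k := by
        rw [← Finset.sum_neg_distrib]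
        exact Finset.sum_congr rfl fun k _ => neg_smul _ _
      rw [hsum]
      simpa using hns.symm
    have := hS _ hnegS
    rw [map_neg] at this
    rw [← hfys]
    linarith
  -- now the contradiction via hu
  set X := f (w j) with hXdef
  have hfz : c * X < u := by
    have : f (c • w j) = c * X := by rw [map_smul, smul_eq_mul]
    rw [← this]; exact hfu
  have hXneg : X < 0 := by nlinarith
  -- apply hu with the vector representing -f
  set uv : ℝ × ℝ := (-(f (1, 0)), -(f (0, 1))) with huvdef
  have hdotuv : ∀ a : ℝ × ℝ, dot2 a uv = -(f a) := by
    intro a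
    rw [clm_eq_dot2 f a]
    simp [dot2, huvdef]
    ring
  have hineq := hu uv
  rw [hdotuv] at hineq
  have hsum_eq : (∑ m, |dot2 (w m) uv|) = ∑ m, |f (w m)| := by
    refine Finset.sum_congr rfl fun m _ => by rw [hdotuv, abs_neg]
  rw [hsum_eq] at hineq
  have hsplit : (∑ m, |f (w m)|) = |X| + ∑ k ∈ Finset.univ.erase j, |f (w k)| := by
    rw [← Finset.add_sum_erase _ _ (Finset.mem_univ j)]
  rw [hsplit, abs_of_neg hXneg] at hineq
  -- hineq : n * (-X) ≤ 2 * (-X + ∑ ...)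
  rw [hcn] at hineq
  have h1 : c * (-X) ≤ ∑ k ∈ Finset.univ.erase j, |f (w k)| := by nlinarith
  have h2 : -u < c * (-X) := by nlinarith
  linarith


lemma dot2_sum_left {ι : Type*} (s : Finset ι) (f : ι → ℝ × ℝ) (u : ℝ × ℝ) :
    dot2 (∑ k ∈ s, f k) u = ∑ k ∈ s, dot2 (f k) u := by
  simp only [dot2, Prod.fst_sum, Prod.snd_sum, Finset.sum_mul, ← Finset.sum_add_distrib]

lemma dot2_smul_left (c : ℝ) (b u : ℝ × ℝ) : dot2 (c • b) u = c * dot2 b u := by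
  simp only [dot2, Prod.smul_fst, Prod.smul_snd, smul_eq_mul]; ring


end
end CodimTwo

open CodimTwo Finset

theorem exists_vector_large_ratio_codim_two
    {n : ℕ} (hn : 4 ≤ n) (heven : Even n)
    (V : Submodule ℝ (Fin n → ℝ))
    (hdim : Module.finrank ℝ V = n - 2) :
    ∃ x : Fin n → ℝ, x ∈ V ∧ x ≠ 0 ∧
      ∃ i : Fin n, ∀ j : Fin n, j ≠ i → |x i| ≥ ((n : ℝ) / 2 - 1) * |x j| := by
  classical
  have hn0 : 0 < n := by omega
  -- the quotient has dimension 2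
  have hQrank : Module.finrank ℝ ((Fin n → ℝ) ⧸ V) = 2 := by
    have h := Submodule.finrank_quotient_add_finrank V
    rw [hdim] at h
    have hpi : Module.finrank ℝ (Fin n → ℝ) = n := by simp
    rw [hpi] at h
    omega
  have hprod : Module.finrank ℝ (ℝ × ℝ) = 2 := by simp
  let e : ((Fin n → ℝ) ⧸ V) ≃ₗ[ℝ] (ℝ × ℝ) :=
    LinearEquiv.ofFinrankEq _ _ (by rw [hQrank, hprod])
  let φ : (Fin n → ℝ) →ₗ[ℝ] (ℝ × ℝ) := e.toLinearMap ∘ₗ V.mkQ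
  have hker : ∀ x : Fin n → ℝ, x ∈ V ↔ φ x = 0 := by
    intro x
    have h1 : φ x = e (V.mkQ x) := rfl
    rw [h1, LinearEquiv.map_eq_zero_iff]
    rw [Submodule.mkQ_apply, Submodule.Quotient.mk_eq_zero]
  set w : Fin n → ℝ × ℝ := fun k => φ (Pi.single k 1) with hwdef
  have hrep : ∀ x : Fin n → ℝ, φ x = ∑ k, x k • w k := by
    intro x
    have hx : x = ∑ k, x k • (Pi.single k (1 : ℝ) : Fin n → ℝ) := by
      rw [← Finset.univ_sum_single x]
      refine Finset.sum_congr rfl fun k _ => ?_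
      ext l
      by_cases h : l = k
      · subst h; simp
      · simp [Pi.single_eq_of_ne h]
    calc φ x = φ (∑ k, x k • (Pi.single k (1 : ℝ) : Fin n → ℝ)) := by rw [← hx]
      _ = ∑ k, x k • w k := by
          rw [map_sum]
          exact Finset.sum_congr rfl fun k _ => by rw [map_smul]
  have hsurj : Function.Surjective φ := by
    have : Function.Surjective (⇑e ∘ ⇑V.mkQ) :=
      e.surjective.comp (Submodule.mkQ_surjective V)
    exact this
  have hspan : ∀ u : ℝ × ℝ, (∀ m, dot2 (w m) u = 0) → u = 0 := by
    intro u hu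
    have key : ∀ y : ℝ × ℝ, dot2 y u = 0 := by
      intro y
      obtain ⟨a, rfl⟩ := hsurj y
      rw [hrep a, dot2_sum_left]
      refine Finset.sum_eq_zero fun k _ => ?_
      rw [dot2_smul_left, hu k, mul_zero]
    have h1 := key (1, 0)
    have h2 := key (0, 1)
    simp only [dot2] at h1 h2
    ext
    · simpa using h1
    · simpa using h2
  by_cases hzero : ∃ i, w i = 0
  · obtain ⟨i, hi⟩ := hzero
    refine ⟨Pi.single i 1, ?_, ?_, i, ?_⟩
    · rw [hker]
      show φ (Pi.single i 1) = 0
      exact hi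
    · intro h
      have := congrFun h i
      simp at this
    · intro k hk
      rw [Pi.single_eq_same, Pi.single_eq_of_ne hk]
      simp
  · push_neg at hzero
    obtain ⟨j, hj⟩ := core hn0 w
    have hu := all_directions w hzero hspan j hj
    set c : ℝ := (n : ℝ) / 2 - 1 with hcdef
    have hc : 0 < c := by
      have : (4 : ℝ) ≤ (n : ℝ) := by exact_mod_cast hn
      rw [hcdef]; linarith
    have hcn : (n : ℝ) = 2 * c + 2 := by rw [hcdef]; ring
    obtain ⟨t, ht, htj, hsum⟩ := mem_zonotope w j c hc hcn hu
    set x : Fin n → ℝ := fun l => t l - c * (Pi.single j (1 : ℝ) : Fin n → ℝ) l with hxdef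
    have hxeq : x = t - c • (Pi.single j (1 : ℝ) : Fin n → ℝ) := by
      funext l
      simp [hxdef]
    have hxj : x j = -c := by
      rw [hxdef]
      simp [htj]
    refine ⟨x, ?_, ?_, j, ?_⟩
    · rw [hker]
      have : φ x = φ t - c • φ (Pi.single j (1 : ℝ) : Fin n → ℝ) := by
        rw [hxeq, map_sub, map_smul]
      rw [this, hrep t, ← hsum]
      show c • w j - c • w j = 0
      simp
    · intro h
      have := congrFun h j
      rw [hxj] at this
      simp at this
      linarith
    · intro k hk
      have hxk : x k = t k := by
        rw [hxdef]
        simp [Pi.single_eq_of_ne hk]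
      rw [hxj, hxk, abs_neg, abs_of_pos hc]
      calc ((n : ℝ) / 2 - 1) * |t k| = c * |t k| := by rw [hcdef]
        _ ≤ c * 1 := by
            have := ht k
            nlinarith [abs_nonneg (t k)]
        _ = c := mul_one c
end

section
/- Let n, k be integers with k > n − k ≥ 2 and (n − k) | k. Every k-dimensional linear subspace V of ℝ^n contains a nonzero vector x such that there exists an index i with |x_i| ≥ (k/(n−k))·|x_j| for all j ≠ i. -/
open Module Metric Finset

theorem aux_sum_diag_le {n : ℕ} (U : Submodule ℝ (Fin n → ℝ))
    (p : Fin n → (Fin n → ℝ)) (hp : ∀ s, p s ∈ U)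
    (hl1 : ∀ s, ∑ t, |p s t| ≤ 1) :
    ∑ s, p s s ≤ (finrank ℝ U : ℝ) := by
  classical
  set g : U → ℝ := fun u => ∑ t, |(u : Fin n → ℝ) t| with hg
  have hgnonneg : ∀ u, 0 ≤ g u := fun u => Finset.sum_nonneg fun t _ => abs_nonneg _
  have hgzero : ∀ u : U, g u = 0 → u = 0 := by
    intro u hu
    have : ∀ t ∈ Finset.univ, |(u : Fin n → ℝ) t| = 0 :=
      (Finset.sum_eq_zero_iff_of_nonneg (fun t _ => abs_nonneg _)).mp hu
    ext t
    simpa using abs_eq_zero.mp (this t (Finset.mem_univ t))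
  have hgsmul : ∀ (c : ℝ) (u : U), g (c • u) = |c| * g u := by
    intro c u
    simp only [hg, Submodule.coe_smul, Pi.smul_apply, smul_eq_mul, abs_mul, ← Finset.mul_sum]
  have hgcont : Continuous g := by
    apply continuous_finset_sum
    intro t _
    exact ((continuous_apply t).comp continuous_subtype_val).abs
  set S : Set U := {u | g u ≤ 1} with hS
  have hSclosed : IsClosed S := isClosed_le hgcont continuous_const
  have hSsub : S ⊆ Metric.closedBall (0 : U) 1 := by
    intro u hu
    rw [Metric.mem_closedBall, dist_zero_right]
    have : ‖(u : Fin n → ℝ)‖ ≤ 1 := by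
      rw [pi_norm_le_iff_of_nonneg zero_le_one]
      intro t
      calc ‖(u : Fin n → ℝ) t‖ = |(u : Fin n → ℝ) t| := rfl
        _ ≤ g u := Finset.single_le_sum (f := fun t => |(u : Fin n → ℝ) t|)
            (fun t _ => abs_nonneg _) (Finset.mem_univ t)
        _ ≤ 1 := hu
    simpa [Submodule.coe_norm] using this
  have hScompact : IsCompact S :=
    (isCompact_closedBall (0 : U) 1).of_isClosed_subset hSclosed hSsub
  set M := finrank ℝ U with hM
  let b : Basis (Fin M) ℝ U := finBasis ℝ U
  have he_cont : Continuous (fun u : U => b.equivFun u) :=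
    LinearMap.continuous_of_finiteDimensional (b.equivFun : U →ₗ[ℝ] (Fin M → ℝ))
  set T : Set (Fin M → ℝ) := (fun u : U => b.equivFun u) '' S with hT
  have hTcompact : IsCompact T := hScompact.image he_cont
  set K : Set (Fin M → Fin M → ℝ) := Set.univ.pi (fun _ => T) with hK
  have hKcompact : IsCompact K := isCompact_univ_pi (fun _ => hTcompact)
  have h0S : (0 : U) ∈ S := by
    simp [hS, hg, hgnonneg]
  have h0T : (0 : Fin M → ℝ) ∈ T := ⟨0, h0S, by simp⟩
  have hKne : K.Nonempty := ⟨fun _ => 0, fun i _ => h0T⟩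
  set F : (Fin M → Fin M → ℝ) → ℝ := fun w => |(Matrix.of (fun i j => w j i)).det| with hF
  have hFcont : Continuous F := by
    apply Continuous.abs
    apply Continuous.matrix_det
    apply continuous_matrix
    intro i j
    exact (continuous_apply i).comp (continuous_apply j)
  obtain ⟨w, hwK, hwmax⟩ := hKcompact.exists_isMaxOn hKne hFcont.continuousOn
  have hwmem : ∀ i, w i ∈ T := fun i => hwK i (Set.mem_univ i)
  -- positivity of the max
  have hgb : ∀ i : Fin M, 0 < g (b i) := by
    intro i
    rcases (hgnonneg (b i)).lt_or_eq with h | h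
    · exact h
    · exact absurd (hgzero _ h.symm) (b.ne_zero i)
  set u0 : Fin M → U := fun i => (g (b i))⁻¹ • b i with hu0
  have hu0S : ∀ i, u0 i ∈ S := by
    intro i
    have : g (u0 i) = 1 := by
      rw [hu0]
      simp only [hgsmul]
      rw [abs_of_pos (inv_pos.mpr (hgb i)), inv_mul_cancel₀ (hgb i).ne']
    simp [hS, this]
  set w0 : Fin M → Fin M → ℝ := fun i => b.equivFun (u0 i) with hw0
  have hw0K : w0 ∈ K := fun i _ => ⟨u0 i, hu0S i, rfl⟩
  have hFw0 : 0 < F w0 := by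
    have hmz : (Matrix.of (fun i j => w0 j i)) = Matrix.diagonal (fun i => (g (b i))⁻¹) := by
      ext i j
      simp only [Matrix.of_apply, hw0, hu0, map_smul, Pi.smul_apply, Matrix.diagonal_apply,
        b.equivFun_self, smul_eq_mul]
      by_cases h : i = j <;> simp [h, eq_comm]
    show 0 < |(Matrix.of (fun i j => w0 j i)).det|
    rw [hmz, Matrix.det_diagonal, abs_pos]
    exact ne_of_gt (Finset.prod_pos fun i _ => inv_pos.mpr (hgb i))
  have hFw : 0 < F w := lt_of_lt_of_le hFw0 (hwmax hw0K)
  set A : Matrix (Fin M) (Fin M) ℝ := Matrix.of (fun i j => w j i) with hA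
  have hFwA : 0 < |A.det| := hFw
  have hdet : A.det ≠ 0 := by
    intro h
    rw [h] at hFwA
    simp at hFwA
  -- choose preimages of the w i
  have hwT : ∀ i, ∃ u ∈ S, b.equivFun u = w i := fun i => hwmem i
  choose v hvS hve using hwT
  -- coefficients for each s
  set y : Fin n → (Fin M → ℝ) := fun s => b.equivFun ⟨p s, hp s⟩ with hy
  have hpsS : ∀ s, (⟨p s, hp s⟩ : U) ∈ S := fun s => hl1 s
  have hyT : ∀ s, y s ∈ T := fun s => ⟨⟨p s, hp s⟩, hpsS s, rfl⟩
  set c : Fin n → Fin M → ℝ := fun s => A.det⁻¹ • A.cramer (y s) with hc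
  have hcbound : ∀ s i, |c s i| ≤ 1 := by
    intro s i
    have hupd : (Matrix.of (fun a bj => Function.update w i (y s) bj a))
        = A.updateCol i (y s) := by
      ext a bj
      simp only [Matrix.of_apply, Matrix.updateCol_apply, Function.update_apply, hA]
      split_ifs <;> rfl
    have hwK' : Function.update w i (y s) ∈ K := by
      intro j _
      rcases eq_or_ne j i with rfl | hne
      · simpa using hyT s
      · simpa [Function.update_apply, hne] using hwmem j
    have hle : |(A.updateCol i (y s)).det| ≤ |A.det| := by
      have h2 : F (Function.update w i (y s)) ≤ F w := hwmax hwK'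
      have h3 : F (Function.update w i (y s))
          = |(A.updateCol i (y s)).det| := by
        show |(Matrix.of (fun a bj => Function.update w i (y s) bj a)).det| = _
        rw [hupd]
      rw [h3] at h2
      exact h2
    have : c s i = A.det⁻¹ * (A.updateCol i (y s)).det := by
      simp [hc, Matrix.cramer_apply]
    rw [this, abs_mul, abs_inv]
    rw [inv_mul_le_iff₀ hFwA, mul_one]
    exact hle
  have hmc : ∀ s, A.mulVec (c s) = y s := by
    intro s
    show A.mulVec (A.det⁻¹ • A.cramer (y s)) = y s
    rw [Matrix.mulVec_smul, Matrix.mulVec_cramer, smul_smul, inv_mul_cancel₀ hdet, one_smul]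
  have hdecomp : ∀ s, (⟨p s, hp s⟩ : U) = ∑ i, c s i • v i := by
    intro s
    apply b.equivFun.injective
    have h1 : b.equivFun (∑ i, c s i • v i) = A.mulVec (c s) := by
      rw [map_sum]
      funext a
      rw [Finset.sum_apply]
      simp only [map_smul, Pi.smul_apply, smul_eq_mul, hve]
      simp [Matrix.mulVec, dotProduct, hA, mul_comm]
    rw [h1, hmc s]
  have hcoord : ∀ s, p s s = ∑ i, c s i * ((v i : Fin n → ℝ) s) := by
    intro s
    have h2 := congrArg (fun u : U => (u : Fin n → ℝ) s) (hdecomp s)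
    simpa [Finset.sum_apply] using h2
  calc ∑ s, p s s ≤ ∑ s, ∑ i, |(v i : Fin n → ℝ) s| := by
        refine Finset.sum_le_sum fun s _ => ?_
        rw [hcoord s]
        refine le_trans (le_abs_self _) (le_trans (Finset.abs_sum_le_sum_abs _ _) ?_)
        refine Finset.sum_le_sum fun i _ => ?_
        rw [abs_mul]
        exact mul_le_of_le_one_left (abs_nonneg _) (hcbound s i)
    _ = ∑ i, ∑ s, |(v i : Fin n → ℝ) s| := Finset.sum_comm
    _ = ∑ i, g (v i) := rfl
    _ ≤ ∑ _i : Fin M, (1 : ℝ) := Finset.sum_le_sum fun i _ => hvS i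
    _ = (M : ℝ) := by simp
    _ = (finrank ℝ U : ℝ) := by rw [hM]


theorem aux_sep {n : ℕ} (V : Submodule ℝ (Fin n → ℝ)) [FiniteDimensional ℝ (Fin n → ℝ)]
    (x : Fin n → ℝ) (δ : ℝ) (hδ : 0 ≤ δ)
    (h : ∀ v ∈ V, δ < dist x v) :
    ∃ P : Fin n → ℝ, (∀ v ∈ V, ∑ t, v t * P t = 0) ∧ (∑ t, |P t| ≤ 1) ∧
      δ < ∑ t, x t * P t := by
  classical
  have hVclosed : IsClosed (V : Set (Fin n → ℝ)) := V.closed_of_finiteDimensional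
  obtain ⟨v0, hv0, hd⟩ := hVclosed.exists_infDist_eq_dist ⟨0, V.zero_mem⟩ x
  set d : ℝ := infDist x (V : Set (Fin n → ℝ)) with hdd
  have hdδ : δ < d := by rw [hd]; exact h v0 hv0
  have hd0 : 0 < d := lt_of_le_of_lt hδ hdδ
  have hdisj : Disjoint (ball x d) (V : Set (Fin n → ℝ)) := by
    rw [Set.disjoint_left]
    intro a ha haV
    have h1 : d ≤ dist x a := infDist_le_dist_of_mem haV
    rw [mem_ball] at ha
    rw [dist_comm] at h1
    linarith
  obtain ⟨f, u, hf1, hf2⟩ :=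
    geometric_hahn_banach_open (convex_ball x d) isOpen_ball V.convex hdisj
  have hfV0 : ∀ v ∈ V, f v = 0 := by
    intro v hv
    by_contra hfv
    have h1 := hf2 (((u - 1) / f v) • v) (V.smul_mem _ hv)
    rw [map_smul, smul_eq_mul, div_mul_cancel₀ _ hfv] at h1
    linarith
  have hu0 : u ≤ 0 := by
    have := hf2 0 V.zero_mem
    simpa using this
  have hball : ∀ z : Fin n → ℝ, ‖z‖ < d → f x + f z < 0 := by
    intro z hz
    have hmem : x + z ∈ ball x d := by
      rw [mem_ball, dist_comm, dist_eq_norm]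
      simpa using hz
    have := hf1 _ hmem
    rw [map_add] at this
    linarith
  have hfx : f x < 0 := by
    have := hball 0 (by simpa using hd0)
    simpa using this
  set P0 : Fin n → ℝ := fun t => f (Pi.single t 1) with hP0
  have hfeval : ∀ z : Fin n → ℝ, f z = ∑ t, z t * P0 t := by
    intro z
    conv_lhs => rw [← Finset.univ_sum_single z]
    rw [map_sum]
    congr 1
    funext t
    have h1 : (Pi.single t (z t) : Fin n → ℝ) = z t • (Pi.single t (1 : ℝ) : Fin n → ℝ) := by
      rw [← Pi.single_smul, smul_eq_mul, mul_one]
    rw [h1, map_smul, smul_eq_mul]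
  set L : ℝ := ∑ t, |P0 t| with hL
  have hLnonneg : 0 ≤ L := Finset.sum_nonneg fun t _ => abs_nonneg _
  have hL0 : 0 < L := by
    rcases hLnonneg.lt_or_eq with h1 | h1
    · exact h1
    · exfalso
      have hz : ∀ t, P0 t = 0 := by
        intro t
        have := (Finset.sum_eq_zero_iff_of_nonneg (fun t _ => abs_nonneg _)).mp h1.symm
        simpa using abs_eq_zero.mp (this t (Finset.mem_univ t))
      have : f x = 0 := by
        rw [hfeval x]
        simp [hz]
      linarith
  set σ : Fin n → ℝ := fun t => if 0 ≤ P0 t then (1 : ℝ) else -1 with hσ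
  have hfσ : f σ = L := by
    rw [hfeval σ, hL]
    congr 1
    funext t
    rw [hσ]
    by_cases hPt : 0 ≤ P0 t
    · simp [hPt, abs_of_nonneg hPt]
    · push_neg at hPt
      simp [hPt.not_ge, abs_of_neg hPt]
  have hσnorm : ‖σ‖ ≤ 1 := by
    rw [pi_norm_le_iff_of_nonneg zero_le_one]
    intro t
    rw [hσ]
    by_cases hPt : 0 ≤ P0 t <;> simp [hPt]
  have hkey : d * L ≤ -f x := by
    by_contra hcon
    push_neg at hcon
    set d' : ℝ := (-f x) / L with hd'
    have hd'0 : 0 < d' := div_pos (by linarith) hL0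
    have hd'd : d' < d := by
      rw [hd', div_lt_iff₀ hL0]
      linarith [mul_comm d L]
    have hzn : ‖d' • σ‖ < d := by
      rw [norm_smul]
      calc ‖d'‖ * ‖σ‖ ≤ ‖d'‖ * 1 := by
            exact mul_le_mul_of_nonneg_left hσnorm (norm_nonneg _)
        _ = d' := by rw [mul_one, Real.norm_eq_abs, abs_of_pos hd'0]
        _ < d := hd'd
    have h2 := hball _ hzn
    rw [map_smul, smul_eq_mul, hfσ] at h2
    rw [hd'] at h2
    rw [div_mul_cancel₀ _ hL0.ne'] at h2
    linarith
  refine ⟨fun t => -(L⁻¹ * P0 t), ?_, ?_, ?_⟩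
  · intro v hv
    have : ∑ t, v t * -(L⁻¹ * P0 t) = -(L⁻¹) * ∑ t, v t * P0 t := by
      rw [Finset.mul_sum]
      congr 1
      funext t
      ring
    rw [this, ← hfeval v, hfV0 v hv, mul_zero]
  · have : ∑ t, |(-(L⁻¹ * P0 t))| = L⁻¹ * L := by
      rw [hL, Finset.mul_sum]
      congr 1
      funext t
      rw [abs_neg, abs_mul, abs_of_nonneg (inv_nonneg.mpr hLnonneg)]
    rw [this, inv_mul_cancel₀ hL0.ne']
  · have : ∑ t, x t * -(L⁻¹ * P0 t) = -(L⁻¹) * ∑ t, x t * P0 t := by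
      rw [Finset.mul_sum]
      congr 1
      funext t
      ring
    rw [this, ← hfeval x]
    have h3 : d ≤ -(L⁻¹) * f x := by
      calc d = d * L / L := by field_simp
        _ ≤ (-f x) / L := by gcongr
        _ = -(L⁻¹) * f x := by ring
    linarith

theorem exists_vector_large_ratio_dvd
    {n k : ℕ} (hk : n - k < k) (hnk : 2 ≤ n - k) (hdvd : (n - k) ∣ k)
    (V : Submodule ℝ (Fin n → ℝ))
    (hdim : Module.finrank ℝ V = k) :
    ∃ x : Fin n → ℝ, x ∈ V ∧ x ≠ 0 ∧
      ∃ i : Fin n, ∀ j : Fin n, j ≠ i → |x i| ≥ ((k : ℝ) / ((n : ℝ) - k)) * |x j| := by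
  classical
  set m : ℕ := n - k with hm
  have hkn : k + 2 ≤ n := by omega
  have hk1 : 1 ≤ k := by omega
  have hn0' : 0 < n := by omega
  haveI : Nonempty (Fin n) := ⟨⟨0, hn0'⟩⟩
  have hn0 : (0 : ℝ) < (n : ℝ) := by exact_mod_cast hn0'
  have hm0 : (0 : ℝ) < (m : ℝ) := by exact_mod_cast (by omega : 0 < m)
  have hmcast : (m : ℝ) = (n : ℝ) - (k : ℝ) := by
    rw [hm, Nat.cast_sub (by omega : k ≤ n)]
  set δ : ℝ := (m : ℝ) / (n : ℝ) with hδdef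
  have hδ0 : 0 ≤ δ := by positivity
  -- the annihilator of V, as a subspace of ℝ^n
  set b := Pi.basisFun ℝ (Fin n) with hb
  set e := b.toDualEquiv with he
  set U : Submodule ℝ (Fin n → ℝ) := V.dualAnnihilator.map e.symm.toLinearMap with hU
  have hUdim : finrank ℝ U = m := by
    have h2 : finrank ℝ ((Fin n → ℝ) ⧸ V) = finrank ℝ V.dualAnnihilator :=
      LinearEquiv.finrank_eq (Subspace.quotEquivAnnihilator V)
    have h3 := Submodule.finrank_quotient_add_finrank V
    have h4 : finrank ℝ (Fin n → ℝ) = n := by simp [Module.finrank_pi]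
    have h5 : finrank ℝ U = finrank ℝ V.dualAnnihilator :=
      LinearEquiv.finrank_map_eq e.symm V.dualAnnihilator
    omega
  have hUmem : ∀ q : Fin n → ℝ, (∀ v ∈ V, ∑ t, v t * q t = 0) → q ∈ U := by
    intro q hq
    have hann : e q ∈ V.dualAnnihilator := by
      rw [Submodule.mem_dualAnnihilator]
      intro v hv
      rw [he, Basis.toDualEquiv_apply]
      have hv2 : v = ∑ t, b.repr v t • b t := (b.sum_repr v).symm
      calc (b.toDual q) v = (b.toDual q) (∑ t, b.repr v t • b t) := by rw [← hv2]
        _ = ∑ t, b.repr v t * (b.toDual q) (b t) := by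
            rw [map_sum]
            congr 1
            funext t
            rw [map_smul, smul_eq_mul]
        _ = ∑ t, v t * q t := by
            congr 1
            funext t
            rw [Basis.toDual_apply_left, hb, Pi.basisFun_repr, Pi.basisFun_repr]
        _ = 0 := hq v hv
    exact Submodule.mem_map.mpr ⟨e q, hann, by simp⟩
  have key : ∃ s : Fin n, ∃ v ∈ V, ∀ t, |(Pi.single s (1:ℝ) : Fin n → ℝ) t - v t| ≤ δ := by
    by_contra hno
    push_neg at hno
    have hsep : ∀ s : Fin n, ∀ v ∈ V, δ < dist (Pi.single s 1 : Fin n → ℝ) v := by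
      intro s v hv
      obtain ⟨t, ht⟩ := hno s v hv
      calc δ < |(Pi.single s (1:ℝ) : Fin n → ℝ) t - v t| := ht
        _ ≤ ‖(Pi.single s 1 : Fin n → ℝ) - v‖ := by
            have h6 := norm_le_pi_norm ((Pi.single s 1 : Fin n → ℝ) - v) t
            simpa using h6
        _ = dist (Pi.single s 1 : Fin n → ℝ) v := (dist_eq_norm _ _).symm
    choose p hp0 hp1 hp2 using fun s => aux_sep V (Pi.single s 1) δ hδ0 (hsep s)
    have hpU : ∀ s, p s ∈ U := fun s => hUmem (p s) (hp0 s)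
    have hcore := aux_sum_diag_le U p hpU hp1
    rw [hUdim] at hcore
    have hdiag : ∀ s, δ < p s s := by
      intro s
      have h7 := hp2 s
      have h6 : ∑ t, (Pi.single s 1 : Fin n → ℝ) t * p s t = p s s := by
        rw [Finset.sum_eq_single s]
        · simp
        · intro t _ hts
          simp [Pi.single_eq_of_ne hts]
        · intro h
          exact absurd (Finset.mem_univ s) h
      rwa [h6] at h7
    have hsum : (m : ℝ) < ∑ s, p s s := by
      have h7 : ∑ _s : Fin n, δ < ∑ s, p s s :=
        Finset.sum_lt_sum_of_nonempty Finset.univ_nonempty (fun s _ => hdiag s)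
      rw [Finset.sum_const, Finset.card_univ, Fintype.card_fin, nsmul_eq_mul] at h7
      have h8 : (n : ℝ) * δ = m := by
        rw [hδdef]
        field_simp
      linarith
    linarith
  obtain ⟨s, v, hvV, hvc⟩ := key
  have hvs : 1 - δ ≤ v s := by
    have h9 := hvc s
    rw [Pi.single_eq_same] at h9
    have h10 := abs_le.mp h9
    linarith [h10.2]
  have hδ1 : δ < 1 := by
    rw [hδdef, div_lt_one hn0]
    exact_mod_cast (by omega : m < n)
  have hvs0 : 0 < v s := by linarith
  refine ⟨v, hvV, ?_, s, ?_⟩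
  · intro h0
    rw [h0] at hvs0
    simp at hvs0
  · intro j hj
    have hvj : |v j| ≤ δ := by
      have h11 := hvc j
      rw [Pi.single_eq_of_ne hj] at h11
      simpa using h11
    rw [ge_iff_le, ← hmcast]
    have hkreal : (k : ℝ) = (n : ℝ) - m := by rw [hmcast]; ring
    have h9 : (k : ℝ) / m * δ = 1 - δ := by
      rw [hδdef, hkreal]
      field_simp
    rw [abs_of_pos hvs0]
    calc (k : ℝ) / (m : ℝ) * |v j| ≤ (k : ℝ) / m * δ := by
          apply mul_le_mul_of_nonneg_left hvj (by positivity)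
      _ = 1 - δ := h9
      _ ≤ v s := hvs
end

section
/- Let u₀,…,u_{n−1} ∈ ℝ^d and m₀,…,m_{n−1} ∈ ℝ^d with d ≤ n, and suppose Σ_{j=0}^{n−1} |⟨u_i, m_j⟩| ≤ 1 for every i. Then Σ_{i=0}^{n−1} ⟨u_i, m_i⟩ ≤ d. -/
open Matrix Polynomial

/-- Any eigenvalue of a complex matrix is bounded by the max row sum. -/
lemma eig_norm_le_of_row_sum {n : ℕ} (A : Matrix (Fin n) (Fin n) ℂ)
    (hA : ∀ i, ∑ j, ‖A i j‖ ≤ 1) {μ : ℂ} {v : Fin n → ℂ} (hv : v ≠ 0)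
    (heig : A.mulVec v = μ • v) : ‖μ‖ ≤ 1 := by
  obtain ⟨i0, hi0⟩ : ∃ i, v i ≠ 0 := by
    by_contra h; push_neg at h; exact hv (funext h)
  have hne : (Finset.univ : Finset (Fin n)).Nonempty := ⟨i0, Finset.mem_univ _⟩
  obtain ⟨i, -, hi⟩ := Finset.exists_max_image Finset.univ (fun j => ‖v j‖) hne
  have hvi : 0 < ‖v i‖ := lt_of_lt_of_le (norm_pos_iff.2 hi0) (hi i0 (Finset.mem_univ _))
  have key : ‖μ‖ * ‖v i‖ ≤ ‖v i‖ := by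
    have h1 : ‖μ‖ * ‖v i‖ = ‖(A.mulVec v) i‖ := by
      rw [heig]; simp [norm_smul]
    rw [h1, mulVec, dotProduct]
    calc ‖∑ j, A i j * v j‖ ≤ ∑ j, ‖A i j * v j‖ := norm_sum_le _ _
      _ ≤ ∑ j, ‖A i j‖ * ‖v i‖ := by
          refine Finset.sum_le_sum fun j _ => ?_
          rw [norm_mul]
          exact mul_le_mul_of_nonneg_left (hi j (Finset.mem_univ _)) (norm_nonneg _)
      _ = (∑ j, ‖A i j‖) * ‖v i‖ := (Finset.sum_mul _ _ _).symm
      _ ≤ 1 * ‖v i‖ := mul_le_mul_of_nonneg_right (hA i) (le_of_lt hvi)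
      _ = ‖v i‖ := one_mul _
  have := le_of_mul_le_mul_right (by linarith [key] : ‖μ‖ * ‖v i‖ ≤ 1 * ‖v i‖) hvi
  linarith

/-- A root of the charpoly of a matrix over a field gives an eigenvector. -/
lemma exists_eigvec_of_root {d : ℕ} (B : Matrix (Fin d) (Fin d) ℂ) {μ : ℂ}
    (hμ : (Polynomial.eval μ B.charpoly) = 0) :
    ∃ v : Fin d → ℂ, v ≠ 0 ∧ B.mulVec v = μ • v := by
  have hdet : (Matrix.diagonal (fun _ : Fin d => μ) - B).det = 0 := by
    have hmap : (charmatrix B).map (Polynomial.evalRingHom μ) =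
        Matrix.diagonal (fun _ : Fin d => μ) - B := by
      ext i j
      by_cases h : i = j <;>
        simp [charmatrix_apply, Matrix.diagonal, h, Matrix.sub_apply]
    have h2 := (Polynomial.evalRingHom μ).map_det (charmatrix B)
    rw [RingHom.mapMatrix_apply, hmap] at h2
    rw [← h2]
    simpa [Matrix.charpoly] using hμ
  obtain ⟨v, hv, hv0⟩ := (Matrix.exists_mulVec_eq_zero_iff).2 hdet
  refine ⟨v, hv, ?_⟩
  have := hv0
  rw [Matrix.sub_mulVec, sub_eq_zero] at this
  rw [← this]
  ext i
  simp [Matrix.mulVec_diagonal]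

open Matrix in
theorem sum_diag_inner_le_dim
    {n d : ℕ} (hdn : d ≤ n)
    (u m : Fin n → (Fin d → ℝ))
    (hnorm : ∀ i, ∑ j, |u i ⬝ᵥ m j| ≤ 1) :
    ∑ i, u i ⬝ᵥ m i ≤ d := by
  classical
  set U : Matrix (Fin n) (Fin d) ℂ := Matrix.of (fun i k => ((u i k : ℝ) : ℂ)) with hU
  set M : Matrix (Fin n) (Fin d) ℂ := Matrix.of (fun i k => ((m i k : ℝ) : ℂ)) with hM
  set A : Matrix (Fin n) (Fin n) ℂ := U * Mᵀ with hA
  set B : Matrix (Fin d) (Fin d) ℂ := Mᵀ * U with hB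
  have hAentry : ∀ i j, A i j = ((u i ⬝ᵥ m j : ℝ) : ℂ) := by
    intro i j
    simp only [hA, hU, hM, Matrix.mul_apply, Matrix.transpose_apply, Matrix.of_apply,
      dotProduct]
    push_cast
    rfl
  have hArow : ∀ i, ∑ j, ‖A i j‖ ≤ 1 := by
    intro i
    calc ∑ j, ‖A i j‖ = ∑ j, |u i ⬝ᵥ m j| := by
          refine Finset.sum_congr rfl fun j _ => ?_
          rw [hAentry, Complex.norm_real, Real.norm_eq_abs]
      _ ≤ 1 := hnorm i
  have hroot : ∀ μ ∈ B.charpoly.roots, μ.re ≤ 1 := by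
    intro μ hμ
    have hr : Polynomial.eval μ B.charpoly = 0 :=
      Polynomial.isRoot_of_mem_roots hμ
    obtain ⟨v, hv, hBv⟩ := exists_eigvec_of_root B hr
    have hnle : ‖μ‖ ≤ 1 := by
      rcases eq_or_ne μ 0 with rfl | hμ0
      · simp
      · have hw : A.mulVec (U.mulVec v) = μ • (U.mulVec v) := by
          rw [Matrix.mulVec_mulVec, hA, Matrix.mul_assoc, ← hB, ← Matrix.mulVec_mulVec, hBv,
            Matrix.mulVec_smul]
        have hwne : U.mulVec v ≠ 0 := by
          intro h
          have h2 : B.mulVec v = 0 := by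
            rw [hB, ← Matrix.mulVec_mulVec, h, Matrix.mulVec_zero]
          rw [hBv] at h2
          exact hv (by simpa [hμ0] using smul_eq_zero.1 h2)
        exact eig_norm_le_of_row_sum A hArow hwne hw
    exact le_trans (Complex.re_le_norm μ) hnle
  have htr : B.trace = ((∑ i, u i ⬝ᵥ m i : ℝ) : ℂ) := by
    rw [hB, Matrix.trace_mul_comm, ← hA]
    simp only [Matrix.trace, Matrix.diag, hAentry]
    push_cast
    rfl
  have hsum := B.trace_eq_sum_roots_charpoly
  have hcard : Multiset.card B.charpoly.roots = d := by
    have h1 := Polynomial.splits_iff_card_roots.1 (IsAlgClosed.splits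
      B.charpoly)
    rw [h1, Matrix.charpoly_natDegree_eq_dim, Fintype.card_fin]
  have hre : (∑ i, u i ⬝ᵥ m i : ℝ) = (B.charpoly.roots.map Complex.re).sum := by
    have := congrArg Complex.re hsum
    rw [htr] at this
    rw [Complex.ofReal_re] at this
    rw [this]
    exact map_multiset_sum Complex.reLm _
  rw [hre]
  calc (B.charpoly.roots.map Complex.re).sum
      ≤ (B.charpoly.roots.map (fun _ => (1:ℝ))).sum := by
        apply Multiset.sum_map_le_sum_map
        intro μ hμ
        exact hroot μ hμ
    _ = (d : ℝ) := by
        rw [Multiset.map_const', Multiset.sum_replicate, hcard]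
        simp
end

section
/- Let k > n − k ≥ 2 with (n−k) | k, set b = n/(n−k), and define V₀ = {x ∈ ℝ^n : Σ_{j=0}^{b−1} x_{i·b + j} = 0 for every i ∈ [0, n−k−1]}. Then V₀ is a k-dimensional subspace of ℝ^n, and for every nonzero x ∈ V₀ and every index t there exists t' ≠ t with |x_{t'}| ≥ |x_t|·(n−k)/k. -/
theorem tightness_subspace_general
    {n k : ℕ} (hk : n - k < k) (hnk : 2 ≤ n - k) (hdvd : (n - k) ∣ k) :
    (∃ V : Submodule ℝ (Fin n → ℝ),
        (V : Set (Fin n → ℝ)) =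
          {x | ∀ i < n - k,
            ∑ t ∈ Finset.univ.filter (fun t : Fin n => (t : ℕ) / (n / (n - k)) = i), x t = 0} ∧
        Module.finrank ℝ V = k) ∧
    (∀ x : Fin n → ℝ,
        (∀ i < n - k,
          ∑ t ∈ Finset.univ.filter (fun t : Fin n => (t : ℕ) / (n / (n - k)) = i), x t = 0) →
        x ≠ 0 →
        ∀ t : Fin n, ∃ t' : Fin n, t' ≠ t ∧
          |x t'| ≥ |x t| * ((n : ℝ) - k) / k) := by
  have hkn : k < n := by omega
  set m := n - k with hm
  have hm0 : 0 < m := by omega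
  have hn : n = k + m := by omega
  have hmn : m ∣ n := by rw [hn]; exact dvd_add hdvd dvd_rfl
  set b := n / m with hb
  have hmb : m * b = n := Nat.mul_div_cancel' hmn
  have hb0 : 0 < b := Nat.div_pos (by omega) hm0
  have hb2 : 2 ≤ b := by
    by_contra h
    push_neg at h
    interval_cases b; omega
  have hkmb : k = m * (b - 1) := by
    have h1 : m * (b - 1) + m * 1 = m * b := by
      rw [← Nat.mul_add]; congr 1; omega
    omega
  have hlt : ∀ t : Fin n, (t : ℕ) / b < m := by
    intro t
    rw [Nat.div_lt_iff_lt_mul hb0]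
    have := t.isLt
    omega
  have hmemS : ∀ (i : ℕ) (t : Fin n),
      ((t : ℕ) / b = i) ↔ (i * b ≤ (t : ℕ) ∧ (t : ℕ) < i * b + b) := by
    intro i t
    constructor
    · intro h
      have h1 := Nat.div_add_mod (t : ℕ) b
      have h2 := Nat.mod_lt (t : ℕ) hb0
      subst h
      constructor
      · exact Nat.div_mul_le_self _ _
      · calc (t : ℕ) = b * ((t : ℕ) / b) + (t : ℕ) % b := h1.symm
          _ < b * ((t : ℕ) / b) + b := by omega
          _ = (t : ℕ) / b * b + b := by rw [Nat.mul_comm]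
    · rintro ⟨h1, h2⟩
      exact Nat.div_eq_of_lt_le (by omega) (by rw [Nat.succ_mul]; omega)
  have hcard : ∀ i : ℕ, i < m →
      (Finset.univ.filter (fun t : Fin n => (t : ℕ) / b = i)).card = b := by
    intro i hi
    have hub : ∀ x ∈ Finset.Ico (i * b) (i * b + b), x < n := by
      intro x hx
      rw [Finset.mem_Ico] at hx
      have : i * b + b ≤ m * b := by
        have : i + 1 ≤ m := hi
        calc i * b + b = (i + 1) * b := by ring
          _ ≤ m * b := Nat.mul_le_mul_right b this
      omega
    have : (Finset.univ.filter (fun t : Fin n => (t : ℕ) / b = i)) =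
        (Finset.Ico (i * b) (i * b + b)).attachFin hub := by
      ext t
      simp [Finset.mem_attachFin, Finset.mem_Ico, hmemS i t]
    rw [this, Finset.card_attachFin, Nat.card_Ico]
    omega
  constructor
  · -- dimension part
    set L : (Fin n → ℝ) →ₗ[ℝ] (Fin m → ℝ) :=
      { toFun := fun x i => ∑ t ∈ Finset.univ.filter (fun t : Fin n => (t : ℕ) / b = (i : ℕ)), x t
        map_add' := by intro x y; funext i; simp [Finset.sum_add_distrib]
        map_smul' := by intro c x; funext i; simp [Finset.mul_sum] } with hL
    refine ⟨LinearMap.ker L, ?_, ?_⟩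
    · ext x
      simp only [SetLike.mem_coe, LinearMap.mem_ker, Set.mem_setOf_eq]
      constructor
      · intro h i hi
        have := congrFun h ⟨i, hi⟩
        simpa [hL] using this
      · intro h
        funext i
        simpa [hL] using h (i : ℕ) i.isLt
    · have hsurj : Function.Surjective L := by
        intro y
        refine ⟨fun t => if b ∣ (t : ℕ) then y ⟨(t : ℕ) / b, hlt t⟩ else 0, ?_⟩
        funext i
        have hib : (i : ℕ) * b < n := by
          have : ((i : ℕ) + 1) * b ≤ m * b := Nat.mul_le_mul_right b i.isLt
          have hbb : 0 < b := hb0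
          nlinarith [i.isLt]
        show (∑ t ∈ Finset.univ.filter (fun t : Fin n => (t : ℕ) / b = (i : ℕ)),
          if b ∣ (t : ℕ) then y ⟨(t : ℕ) / b, hlt t⟩ else 0) = y i
        rw [Finset.sum_eq_single_of_mem (⟨(i : ℕ) * b, hib⟩ : Fin n)]
        · have hdvd' : b ∣ ((i : ℕ) * b) := dvd_mul_left b (i : ℕ)
          simp only [hdvd', if_true]
          congr 1
          ext
          simp [Nat.mul_div_cancel _ hb0]
        · simp [Nat.mul_div_cancel _ hb0]
        · intro t ht hne
          rw [Finset.mem_filter] at ht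
          rw [if_neg]
          intro hdvd'
          apply hne
          obtain ⟨c, hc⟩ := hdvd'
          have : c = (i : ℕ) := by
            rw [← ht.2, hc, Nat.mul_comm, Nat.mul_div_cancel _ hb0]
          ext
          simp [hc, this, Nat.mul_comm]
      have hrange : LinearMap.range L = ⊤ := LinearMap.range_eq_top.mpr hsurj
      have := LinearMap.finrank_range_add_finrank_ker L
      rw [hrange, finrank_top] at this
      simp only [Module.finrank_pi, Fintype.card_fin] at this
      omega
  · -- inequality part
    intro x hx _ t
    set i : ℕ := (t : ℕ) / b with hi
    have hiS : t ∈ Finset.univ.filter (fun t' : Fin n => (t' : ℕ) / b = i) := by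
      simp [hi]
    set s : Finset (Fin n) :=
      (Finset.univ.filter (fun t' : Fin n => (t' : ℕ) / b = i)).erase t with hs
    have hcards : s.card = b - 1 := by
      rw [hs, Finset.card_erase_of_mem hiS, hcard i (hlt t)]
    have hsne : s.Nonempty := by
      rw [← Finset.card_pos, hcards]; omega
    have hsum : ∑ t' ∈ s, x t' = - x t := by
      have := Finset.sum_erase_add _ x hiS
      have h0 := hx i (hlt t)
      rw [← hs] at this
      linarith [this, h0]
    have habs : |x t| ≤ ∑ t' ∈ s, |x t'| := by
      calc |x t| = |∑ t' ∈ s, x t'| := by rw [hsum, abs_neg]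
        _ ≤ ∑ t' ∈ s, |x t'| := Finset.abs_sum_le_sum_abs _ _
    have hb1R : (0 : ℝ) < (b : ℝ) - 1 := by
      have : (2 : ℝ) ≤ (b : ℝ) := by exact_mod_cast hb2
      linarith
    have hkey : ∃ t' ∈ s, |x t| / ((b : ℝ) - 1) ≤ |x t'| := by
      apply Finset.exists_le_of_sum_le hsne
      rw [Finset.sum_const, hcards, nsmul_eq_mul]
      have : ((b - 1 : ℕ) : ℝ) = (b : ℝ) - 1 := by
        push_cast [Nat.cast_sub (by omega : 1 ≤ b)]; ring
      rw [this, mul_div_cancel₀ _ (ne_of_gt hb1R)]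
      exact habs
    obtain ⟨t', ht's, ht'⟩ := hkey
    refine ⟨t', ?_, ?_⟩
    · exact Finset.ne_of_mem_erase ht's
    · have hmR : ((n : ℝ) - k) = (m : ℝ) := by
        have : (n : ℝ) = (k : ℝ) + m := by exact_mod_cast hn
        linarith
      rw [ge_iff_le, hmR]
      have hkR : (k : ℝ) = (m : ℝ) * ((b : ℝ) - 1) := by
        have : ((m * (b - 1) : ℕ) : ℝ) = (m : ℝ) * ((b : ℝ) - 1) := by
          push_cast [Nat.cast_sub (by omega : 1 ≤ b)]; ring
        rw [hkmb]; exact this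
      rw [hkR]
      have hmR0 : (0 : ℝ) < (m : ℝ) := by exact_mod_cast hm0
      have : |x t| * (m : ℝ) / ((m : ℝ) * ((b : ℝ) - 1)) = |x t| / ((b : ℝ) - 1) := by
        field_simp
      rw [this]
      exact ht'
end

section
/- Let n ≥ 4 be even and c = n/2 − 1. Suppose m₀,…,m_{n−1} ∈ ℝ² are the columns of a rank-2 matrix, and suppose for every i there exists u_i ∈ ℝ² with Σ_{j=0}^{n−1} |⟨u_i, m_j⟩| = 1 and ⟨u_i, m_i⟩ > 1/(c+1). Then a contradiction follows; i.e., it is impossible that ⟨u_i, m_i⟩ > 2/n for all i under the normalization Σ_j |⟨u_i, m_j⟩| = 1. -/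
open Matrix in
theorem no_uniform_separation_codim_two
    {n : ℕ} (hn : 4 ≤ n) (heven : Even n)
    (m : Fin n → (Fin 2 → ℝ))
    (hrank : (Matrix.of fun (i : Fin 2) (j : Fin n) => m j i).rank = 2)
    (u : Fin n → (Fin 2 → ℝ))
    (hnorm : ∀ i, ∑ j, |u i ⬝ᵥ m j| = 1)
    (hsep : ∀ i, u i ⬝ᵥ m i > 1 / (((n : ℝ) / 2 - 1) + 1)) :
    False := by
  have hnpos : (0:ℝ) < n := by
    have : (4:ℝ) ≤ n := by exact_mod_cast hn
    linarith
  set M : Matrix (Fin 2) (Fin n) ℝ := Matrix.of fun i j => m j i with hM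
  set U : Matrix (Fin n) (Fin 2) ℝ := Matrix.of fun i k => u i k with hU
  set A : Matrix (Fin n) (Fin n) ℝ := U * M with hA
  have hAentry : ∀ i j, A i j = u i ⬝ᵥ m j := by
    intro i j
    simp [hA, Matrix.mul_apply, dotProduct, hU, hM]
  -- row sums of |A| equal 1
  have hrow : ∀ i, ∑ j, |A i j| = 1 := by
    intro i; simp only [hAentry]; exact hnorm i
  -- row sums of |A^(k+1)| are ≤ 1
  have hrowpow : ∀ k, ∀ i, ∑ j, |(A^(k+1)) i j| ≤ 1 := by
    intro k
    induction k with
    | zero => intro i; rw [pow_one]; exact (hrow i).le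
    | succ k ih =>
      intro i
      have hstep : A^(k+1+1) = A * A^(k+1) := by rw [← pow_succ']
      rw [hstep]
      calc ∑ j, |(A * A^(k+1)) i j|
          ≤ ∑ j, ∑ l, |A i l| * |(A^(k+1)) l j| := by
            apply Finset.sum_le_sum; intro j _
            rw [Matrix.mul_apply]
            calc |∑ l, A i l * (A^(k+1)) l j|
                ≤ ∑ l, |A i l * (A^(k+1)) l j| := Finset.abs_sum_le_sum_abs _ _
              _ = ∑ l, |A i l| * |(A^(k+1)) l j| := by simp [abs_mul]
        _ = ∑ l, |A i l| * ∑ j, |(A^(k+1)) l j| := by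
            rw [Finset.sum_comm]; simp [Finset.mul_sum]
        _ ≤ ∑ l, |A i l| * 1 := by
            apply Finset.sum_le_sum; intro l _
            exact mul_le_mul_of_nonneg_left (ih l) (abs_nonneg _)
        _ = 1 := by
            simp only [mul_one]; exact hrow i
  -- trace bound for powers of A
  have htrA : ∀ k, |Matrix.trace (A^(k+1))| ≤ (n:ℝ) := by
    intro k
    calc |Matrix.trace (A^(k+1))| ≤ ∑ i, |(A^(k+1)) i i| := by
          simpa [Matrix.trace, Matrix.diag] using
            Finset.abs_sum_le_sum_abs (fun i => (A^(k+1)) i i) Finset.univ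
      _ ≤ ∑ _i : Fin n, (1:ℝ) := by
          apply Finset.sum_le_sum; intro i _
          exact le_trans
            (Finset.single_le_sum (f := fun j => |(A^(k+1)) i j|)
              (fun j _ => abs_nonneg _) (Finset.mem_univ i))
            (hrowpow k i)
      _ = n := by simp
  set B : Matrix (Fin 2) (Fin 2) ℝ := M * U with hB
  have key : ∀ k, B^(k+1) = M * (A^k * U) := by
    intro k; induction k with
    | zero => simp [hB]
    | succ k ih =>
      calc B^(k+1+1) = B^(k+1) * B := by rw [pow_succ]
        _ = (M * (A^k * U)) * (M * U) := by rw [ih, hB]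
        _ = M * (A^(k+1) * U) := by
            rw [pow_succ, hA]
            simp only [Matrix.mul_assoc]
  have hBtr : ∀ k, Matrix.trace (B^(k+1)) = Matrix.trace (A^(k+1)) := by
    intro k
    rw [key k, Matrix.trace_mul_comm, Matrix.mul_assoc, ← hA, ← pow_succ]
  have htrB : ∀ k, |Matrix.trace (B^(k+1))| ≤ (n:ℝ) := by
    intro k; rw [hBtr k]; exact htrA k
  -- trace B > 2
  have hsv : Matrix.trace B > 2 := by
    have h1 : Matrix.trace B = ∑ i, u i ⬝ᵥ m i := by
      have : Matrix.trace B = Matrix.trace (A^(0+1)) := by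
        rw [← hBtr 0, pow_one]
      rw [pow_one] at this
      rw [this]
      simp [Matrix.trace, Matrix.diag, hAentry]
    have h2 : ∀ i : Fin n, (2:ℝ)/n < u i ⬝ᵥ m i := by
      intro i
      have := hsep i
      have he : (1:ℝ) / (((n : ℝ) / 2 - 1) + 1) = 2 / n := by
        rw [sub_add_cancel]
        field_simp
      rwa [he] at this
    have h3 : ∑ _i : Fin n, (2:ℝ)/n < ∑ i, u i ⬝ᵥ m i := by
      apply Finset.sum_lt_sum_of_nonempty
      · have hp : 0 < n := by omega
        have : Nonempty (Fin n) := Fin.pos_iff_nonempty.mp hp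
        exact Finset.univ_nonempty
      · intro i _; exact h2 i
    have h4 : ∑ _i : Fin n, (2:ℝ)/n = 2 := by
      rw [Finset.sum_const, Finset.card_univ, Fintype.card_fin, nsmul_eq_mul]
      field_simp
    rw [h1]; rw [h4] at h3; exact h3
  -- 2x2 trace identity
  have hid : ∀ C : Matrix (Fin 2) (Fin 2) ℝ,
      Matrix.trace (C*C) = (Matrix.trace C)^2 - 2 * C.det := by
    intro C
    simp only [Matrix.trace_fin_two, Matrix.det_fin_two, Matrix.mul_apply,
      Fin.sum_univ_two]
    ring
  have hdouble : ∀ k, Matrix.trace (B^(2*(k+1)))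
      = (Matrix.trace (B^(k+1)))^2 - 2 * (B.det)^(k+1) := by
    intro k
    have : B^(2*(k+1)) = B^(k+1) * B^(k+1) := by
      rw [two_mul, pow_add]
    rw [this, hid, Matrix.det_pow]
  -- |det B| ≤ 1
  have hdet : |B.det| ≤ 1 := by
    by_contra h
    push_neg at h
    obtain ⟨k, hk⟩ := pow_unbounded_of_one_lt ((n:ℝ)^2 + n) h
    have hb : |B.det|^k ≤ |B.det|^(k+1) :=
      pow_le_pow_right₀ (le_of_lt h) (Nat.le_succ k)
    have hk1 : (n:ℝ)^2 + n < |B.det|^(k+1) := lt_of_lt_of_le hk hb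
    have hbound : 2 * |B.det|^(k+1) ≤ (n:ℝ)^2 + n := by
      have e : 2 * (B.det)^(k+1)
          = (Matrix.trace (B^(k+1)))^2 - Matrix.trace (B^(2*(k+1))) := by
        rw [hdouble k]; ring
      have e2 : 2 * |B.det|^(k+1) = |2 * (B.det)^(k+1)| := by
        rw [abs_mul, abs_pow]; simp
      rw [e2, e]
      have h1 := htrB k
      have h2kk : 2*(k+1) = (2*k+1)+1 := by ring
      have h2 := htrB (2*k+1)
      rw [← h2kk] at h2
      calc |(Matrix.trace (B^(k+1)))^2 - Matrix.trace (B^(2*(k+1)))|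
          ≤ |(Matrix.trace (B^(k+1)))^2| + |Matrix.trace (B^(2*(k+1)))| :=
            abs_sub _ _
        _ ≤ (n:ℝ)^2 + n := by
            rw [abs_pow]
            exact add_le_add (pow_le_pow_left₀ (abs_nonneg _) h1 2) h2
    nlinarith [pow_nonneg (abs_nonneg B.det) (k+1)]
  -- growth of trace(B^(2^j))
  have hgrow : ∀ j, 4^j * (Matrix.trace B - 2) ≤ Matrix.trace (B^(2^j)) - 2 := by
    intro j
    induction j with
    | zero => simp
    | succ j ih =>
      have hpk : (2:ℕ)^j = (2^j - 1) + 1 := (Nat.sub_add_cancel Nat.one_le_two_pow).symm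
      have hd : Matrix.trace (B^(2^(j+1)))
          = (Matrix.trace (B^(2^j)))^2 - 2 * (B.det)^(2^j) := by
        have : (2:ℕ)^(j+1) = 2*((2^j - 1)+1) := by
          rw [← hpk]; ring
        rw [this, hdouble, ← hpk]
      have hdp : (B.det)^(2^j) ≤ 1 := by
        calc (B.det)^(2^j) ≤ |(B.det)^(2^j)| := le_abs_self _
          _ = |B.det|^(2^j) := (abs_pow _ _)
          _ ≤ 1 := pow_le_one₀ (abs_nonneg _) hdet
      have htj : Matrix.trace (B^(2^j)) ≥ 2 + 4^j * (Matrix.trace B - 2) := by linarith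
      have h4 : (0:ℝ) < 4^j * (Matrix.trace B - 2) := by
        apply mul_pos (by positivity); linarith
      have ht2 : Matrix.trace (B^(2^j)) ≥ 2 := by linarith
      calc 4^(j+1) * (Matrix.trace B - 2)
          = 4 * (4^j * (Matrix.trace B - 2)) := by ring
        _ ≤ (Matrix.trace (B^(2^j)) + 2) * (Matrix.trace (B^(2^j)) - 2) := by
            apply mul_le_mul (by linarith) ih (le_of_lt h4) (by linarith)
        _ = (Matrix.trace (B^(2^j)))^2 - 4 := by ring
        _ ≤ Matrix.trace (B^(2^j))^2 - 2 * (B.det)^(2^j) - 2 := by linarith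
        _ = Matrix.trace (B^(2^(j+1))) - 2 := by rw [hd]
  -- final contradiction
  obtain ⟨j, hj⟩ := pow_unbounded_of_one_lt ((n:ℝ) / (Matrix.trace B - 2)) (by norm_num : (1:ℝ) < 4)
  have hpos2 : (0:ℝ) < Matrix.trace B - 2 := by linarith
  have hj' : (n:ℝ) < 4^j * (Matrix.trace B - 2) := by
    rw [div_lt_iff₀ hpos2] at hj; linarith [hj]
  have h1 := hgrow j
  have hpk : (2:ℕ)^j = (2^j - 1) + 1 := (Nat.sub_add_cancel Nat.one_le_two_pow).symm
  have h2 : Matrix.trace (B^(2^j)) ≤ (n:ℝ) := by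
    have := htrB (2^j - 1)
    rw [← hpk] at this
    exact le_trans (le_abs_self _) this
  linarith
end
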